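/- arXiv:2009.14521 — 10 statements merged into one kernel-verified Lean document; each statement's English description precedes it below -/
import Mathlib

section
/- Let n ≥ 2, let λ > 0, and let a : Fin n → ℝ be a finite family of reals whose maximum is strictly positive. Let w > 0 be a real number satisfying w·exp(w) = exp(−1) (i.e., w = W(1/e), the Lambert W function evaluated at 1/e). Then (max_i a_i) − (∑_i a_i·exp(λ·a_i)) / (∑_i exp(λ·a_i)) ≤ w/λ + (n−2)/(λ·e). -/
open Finset Real

/-- Lambert W inequality: `t - w ≤ w * exp t` for all `t`, when `w * e^w = e^{-1}`. -/
lemma lambert_key (w : ℝ) (hw : 0 < w) (hwe : w * Real.exp w = Real.exp (-1)) (t : ℝ) :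
    t - w ≤ w * Real.exp t := by
  have h1 : Real.exp (t - 1 - w) = Real.exp t * Real.exp (-1) * Real.exp (-w) := by
    rw [← Real.exp_add, ← Real.exp_add]; ring_nf
  have h2 : Real.exp w * Real.exp (-w) = 1 := by rw [← Real.exp_add]; simp
  have h3 : w * Real.exp t = Real.exp (t - 1 - w) := by
    rw [h1, ← hwe]; linear_combination (-(w * Real.exp t)) * h2
  have h4 := Real.add_one_le_exp (t - 1 - w)
  linarith [h3, h4]

/-- Key lemma: the gap between the maximum and the logit softmax of `n ≥ 2`
(here `n + 2`) real utilities with strictly positive maximum is bounded by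
`W(1/e)/λ + (n-2)/(λ e)`. -/
theorem max_sub_softmax_le (n : ℕ) (lam : ℝ) (hlam : 0 < lam)
    (a : Fin (n + 2) → ℝ)
    (hmax : 0 < Finset.univ.sup' Finset.univ_nonempty a)
    (w : ℝ) (hw : 0 < w) (hwe : w * Real.exp w = Real.exp (-1)) :
    Finset.univ.sup' Finset.univ_nonempty a -
        (∑ i, a i * Real.exp (lam * a i)) / (∑ i, Real.exp (lam * a i)) ≤
      w / lam + (((n + 2 : ℕ) : ℝ) - 2) / (lam * Real.exp 1) := by
  set M := Finset.univ.sup' Finset.univ_nonempty a with hMdef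
  obtain ⟨m, -, hm⟩ := Finset.exists_mem_eq_sup' Finset.univ_nonempty a
  obtain ⟨j, hjm⟩ := Fintype.exists_ne_of_one_lt_card (by simp) m
  have haM : ∀ i, a i ≤ M := fun i => Finset.le_sup' a (Finset.mem_univ i)
  set E : ℝ := ∑ i, Real.exp (lam * a i) with hEdef
  set N : ℝ := ∑ i, a i * Real.exp (lam * a i) with hNdef
  have hE : 0 < E := Finset.sum_pos (fun i _ => Real.exp_pos _) Finset.univ_nonempty
  set B : ℝ := w / lam + (((n + 2 : ℕ) : ℝ) - 2) / (lam * Real.exp 1) with hBdef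
  have hn : ((n + 2 : ℕ) : ℝ) - 2 = (n : ℝ) := by push_cast; ring
  -- reduce to M * E - N ≤ B * E
  suffices key : M * E - N ≤ B * E by
    have heq : M - N / E = (M * E - N) / E := by field_simp
    rw [heq, div_le_iff₀ hE]
    exact key
  have hsum : M * E - N = ∑ i, (M - a i) * Real.exp (lam * a i) := by
    rw [hEdef, hNdef, Finset.mul_sum, ← Finset.sum_sub_distrib]
    exact Finset.sum_congr rfl (fun i _ => by ring)
  -- split off indices m and j
  set f : Fin (n + 2) → ℝ := fun i => (M - a i) * Real.exp (lam * a i) with hfdef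
  have hjmem : j ∈ Finset.univ.erase m := Finset.mem_erase.2 ⟨hjm, Finset.mem_univ j⟩
  have hsplit : ∑ i, f i = f m + (f j + ∑ i ∈ (Finset.univ.erase m).erase j, f i) := by
    rw [add_comm (f j), Finset.sum_erase_add _ _ hjmem, add_comm (f m),
      Finset.sum_erase_add _ _ (Finset.mem_univ m)]
  have hfm : f m = 0 := by simp [hfdef, ← hm]; exact sub_eq_zero.mpr rfl
  have hcard : ((Finset.univ.erase m).erase j).card = n := by
    rw [Finset.card_erase_of_mem hjmem, Finset.card_erase_of_mem (Finset.mem_univ m)]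
    simp
  -- each remaining term bounded by exp(lam*M - 1)/lam
  have hrest : ∀ i ∈ (Finset.univ.erase m).erase j, f i ≤ Real.exp (lam * M - 1) / lam := by
    intro i _
    have ht : lam * (M - a i) ≤ Real.exp (lam * (M - a i) - 1) := by
      have := Real.add_one_le_exp (lam * (M - a i) - 1)
      linarith
    have hprod : Real.exp (lam * (M - a i) - 1) * Real.exp (lam * a i)
        = Real.exp (lam * M - 1) := by
      rw [← Real.exp_add]; ring_nf
    have hep := Real.exp_pos (lam * a i)
    have h5 : lam * (M - a i) * Real.exp (lam * a i) ≤ Real.exp (lam * M - 1) := by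
      calc lam * (M - a i) * Real.exp (lam * a i)
          ≤ Real.exp (lam * (M - a i) - 1) * Real.exp (lam * a i) := by
            apply mul_le_mul_of_nonneg_right ht hep.le
        _ = Real.exp (lam * M - 1) := hprod
    simp only [hfdef]
    rw [le_div_iff₀ hlam]
    have heq : (M - a i) * Real.exp (lam * a i) * lam
        = lam * (M - a i) * Real.exp (lam * a i) := by ring
    linarith [h5, heq.le, heq.ge]
  have hrestsum : ∑ i ∈ (Finset.univ.erase m).erase j, f i
      ≤ (n : ℝ) * (Real.exp (lam * M - 1) / lam) := by
    have := Finset.sum_le_card_nsmul _ f (Real.exp (lam * M - 1) / lam) hrest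
    rwa [hcard, nsmul_eq_mul] at this
  -- the j term
  have hj : f j ≤ w / lam * (Real.exp (lam * M) + Real.exp (lam * a j)) := by
    have hk := lambert_key w hw hwe (lam * (M - a j))
    have hprod : Real.exp (lam * (M - a j)) * Real.exp (lam * a j) = Real.exp (lam * M) := by
      rw [← Real.exp_add]; ring_nf
    have hep := Real.exp_pos (lam * a j)
    have h6 : lam * (M - a j) * Real.exp (lam * a j)
        ≤ w * Real.exp (lam * M) + w * Real.exp (lam * a j) := by
      nlinarith [mul_le_mul_of_nonneg_right hk hep.le]
    simp only [hfdef]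
    rw [div_mul_eq_mul_div, le_div_iff₀ hlam]
    have heq : (M - a j) * Real.exp (lam * a j) * lam
        = lam * (M - a j) * Real.exp (lam * a j) := by ring
    linarith [h6, heq.le, heq.ge]
  -- lower bounds on E
  have hMa : M = a m := hm
  have hEpair : Real.exp (lam * M) + Real.exp (lam * a j) ≤ E := by
    have hsub : ({m, j} : Finset (Fin (n + 2))) ⊆ Finset.univ := Finset.subset_univ _
    have h := Finset.sum_le_sum_of_subset_of_nonneg hsub
      (fun i _ _ => (Real.exp_pos (lam * a i)).le)
    rw [Finset.sum_pair (Ne.symm hjm)] at h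
    rw [hMa, hEdef]; exact h
  have hEone : Real.exp (lam * M) ≤ E := by
    have h := Finset.single_le_sum (f := fun i => Real.exp (lam * a i))
      (fun i _ => (Real.exp_pos (lam * a i)).le) (Finset.mem_univ m)
    rw [hMa, hEdef]; exact h
  -- combine
  rw [hsum, hsplit, hfm, zero_add]
  have hwl : 0 ≤ w / lam := le_of_lt (div_pos hw hlam)
  have hBE : w / lam * (Real.exp (lam * M) + Real.exp (lam * a j))
      + (n : ℝ) * (Real.exp (lam * M - 1) / lam) ≤ B * E := by
    rw [hBdef, hn, add_mul]
    have h7 : w / lam * (Real.exp (lam * M) + Real.exp (lam * a j)) ≤ w / lam * E :=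
      mul_le_mul_of_nonneg_left hEpair hwl
    have h8 : (n : ℝ) * (Real.exp (lam * M - 1) / lam) ≤ (n : ℝ) / (lam * Real.exp 1) * E := by
      have hee : Real.exp (lam * M - 1) = Real.exp (lam * M) / Real.exp 1 := by
        rw [Real.exp_sub]
      have he1 : (0:ℝ) < Real.exp 1 := Real.exp_pos 1
      have heq2 : (n:ℝ) * (Real.exp (lam * M) / Real.exp 1 / lam)
          = (n:ℝ) / (lam * Real.exp 1) * Real.exp (lam * M) := by
        field_simp
      rw [hee, heq2]
      exact mul_le_mul_of_nonneg_left hEone (by positivity)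
    linarith
  exact le_trans (add_le_add hj hrestsum) hBE
end

section
/- Let a, b, λ, w be real numbers with b ≤ a, a > 0, λ > 0, and w > 0 satisfying w·exp(w) = exp(−1). Then a − (a·exp(λ·a) + b·exp(λ·b)) / (exp(λ·a) + exp(λ·b)) ≤ w/λ. -/
/-- Two-action base case: the gap between the maximum `a` and the logit softmax
of the pair `(a, b)` (with `b ≤ a`, `a > 0`) is at most `W(1/e)/λ`. -/
theorem max_sub_softmax_pair_le (a b lam w : ℝ) (hba : b ≤ a) (ha : 0 < a)
    (hlam : 0 < lam) (hw : 0 < w) (hwe : w * Real.exp w = Real.exp (-1)) :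
    a - (a * Real.exp (lam * a) + b * Real.exp (lam * b)) /
        (Real.exp (lam * a) + Real.exp (lam * b)) ≤ w / lam := by
  have hS : 0 < Real.exp (lam * a) + Real.exp (lam * b) := by positivity
  have hw1 : w * Real.exp (w + 1) = 1 := by
    rw [Real.exp_add, ← mul_assoc, hwe, ← Real.exp_add]
    norm_num
  have key : ∀ t : ℝ, t ≤ w * (Real.exp t + 1) := by
    intro t
    have h1 := Real.add_one_le_exp (t - (w + 1))
    have h2 : Real.exp (t - (w + 1)) * Real.exp (w + 1) = Real.exp t := by
      rw [← Real.exp_add]; ring_nf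
    have h3 : 0 < Real.exp (w + 1) := Real.exp_pos _
    have h4 : (t - w) * Real.exp (w + 1) ≤ Real.exp t := by
      calc (t - w) * Real.exp (w + 1) ≤ Real.exp (t - (w + 1)) * Real.exp (w + 1) := by
            apply mul_le_mul_of_nonneg_right _ h3.le; linarith
        _ = Real.exp t := h2
    have h5 := mul_le_mul_of_nonneg_left h4 hw.le
    have h6 : w * ((t - w) * Real.exp (w + 1)) = t - w := by
      rw [show w * ((t - w) * Real.exp (w + 1)) = (t - w) * (w * Real.exp (w + 1)) by ring, hw1, mul_one]
    nlinarith [h5, h6]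
  have heq : a - (a * Real.exp (lam * a) + b * Real.exp (lam * b)) /
      (Real.exp (lam * a) + Real.exp (lam * b)) =
      (a - b) * Real.exp (lam * b) / (Real.exp (lam * a) + Real.exp (lam * b)) := by
    field_simp
    ring
  rw [heq, div_le_div_iff₀ hS hlam]
  have hsplit : Real.exp (lam * a) = Real.exp (lam * (a - b)) * Real.exp (lam * b) := by
    rw [← Real.exp_add]; ring_nf
  have hk := key (lam * (a - b))
  nlinarith [Real.exp_pos (lam * b), mul_le_mul_of_nonneg_right hk (Real.exp_pos (lam * b)).le]
end

section
/- Let a > 0 and λ > 0 be reals, and let w > 0 satisfy w·exp(w) = exp(−1). Define d : ℝ → ℝ by d(x) = a − (a·exp(λ·a) + a·x·exp(λ·a·x)) / (exp(λ·a) + exp(λ·a·x)). Then for every x ≤ 1 one has d(x) ≤ w/λ, and equality holds exactly at x = (a·λ − w − 1)/(a·λ), i.e., d attains its maximum value w/λ on (−∞, 1] uniquely at the point r = 1 − (w + 1)/(a·λ). -/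
/-- The two-action max–softmax gap `d(x)` is at most `w/λ` for `x ≤ 1`, with
equality exactly at `x = (aλ - w - 1)/(aλ)`, where `w = W(1/e)`. -/
theorem two_action_gap_max (a lam w : ℝ) (ha : 0 < a) (hlam : 0 < lam)
    (hw : 0 < w) (hwe : w * Real.exp w = Real.exp (-1))
    (d : ℝ → ℝ)
    (hd : ∀ x, d x = a - (a * Real.exp (lam * a) + a * x * Real.exp (lam * a * x)) /
        (Real.exp (lam * a) + Real.exp (lam * a * x))) :
    ∀ x ≤ (1 : ℝ), d x ≤ w / lam ∧ (d x = w / lam ↔ x = (a * lam - w - 1) / (a * lam)) := by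
  have hwexp : Real.exp (-(w+1)) = w := by
    rw [show -(w+1) = -1 + -w by ring, Real.exp_add, ← hwe, Real.exp_neg]
    field_simp
  intro x hx
  set t := lam * a * (1 - x) with ht
  have hwt : w * Real.exp t = Real.exp (t - (w+1)) := by
    rw [show t - (w+1) = -(w+1) + t by ring, Real.exp_add, hwexp]
  have hs := Real.add_one_le_exp (t - (w+1))
  have hkey : t ≤ w * (Real.exp t + 1) := by nlinarith [hs, hwt]
  have hF : (0:ℝ) < Real.exp (lam*a*x) := Real.exp_pos _
  have hE : Real.exp (lam*a) = Real.exp t * Real.exp (lam*a*x) := by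
    rw [← Real.exp_add, ht]; ring_nf
  have hden : 0 < Real.exp (lam*a) + Real.exp (lam*a*x) := by positivity
  have hdx : d x = (a * (1-x) * Real.exp (lam*a*x)) /
      (Real.exp (lam*a) + Real.exp (lam*a*x)) := by
    rw [hd x]
    field_simp
    ring
  have halam : a * lam ≠ 0 := by positivity
  constructor
  · rw [hdx, div_le_div_iff₀ hden hlam, hE]
    nlinarith [hkey, hF]
  · constructor
    · intro heq
      rw [hdx, div_eq_div_iff (ne_of_gt hden) (ne_of_gt hlam), hE] at heq
      have hteq : t = w * (Real.exp t + 1) := by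
        have h2 : (a * (1-x) * lam - w * (Real.exp t + 1)) * Real.exp (lam*a*x) = 0 := by
          ring_nf
          ring_nf at heq
          linarith [heq]
        have h3 : a * (1-x) * lam - w * (Real.exp t + 1) = 0 := by
          rcases mul_eq_zero.mp h2 with h | h
          · exact h
          · exact absurd h (ne_of_gt hF)
        have : t = a * (1-x) * lam := by rw [ht]; ring
        linarith
      -- equality forces t = w + 1
      have hs0 : t - (w+1) = 0 := by
        by_contra hne
        have := Real.add_one_lt_exp hne
        nlinarith [hwt]
      have htval : t = w + 1 := by linarith
      have : lam * a * (1 - x) = w + 1 := by rw [← ht]; exact htval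
      field_simp
      nlinarith [this]
    · intro hxval
      have htval : t = w + 1 := by
        rw [ht, hxval]
        field_simp
        ring
      have hexpt : w * Real.exp t = 1 := by
        rw [hwt, htval]
        simp
      rw [hdx, div_eq_div_iff (ne_of_gt hden) (ne_of_gt hlam), hE]
      have h1 : a * (1-x) * lam = t := by rw [ht]; ring
      nlinarith [hexpt, hF, htval]
end

section
/- Let n ≥ 2, ε > 0, and let a : Fin n → ℝ have strictly positive maximum. Let w > 0 satisfy w·exp(w) = exp(−1). If λ ≥ (w + (n−2)/e)/ε, then (max_i a_i) − (∑_i a_i·exp(λ·a_i)) / (∑_i exp(λ·a_i)) ≤ ε; that is, the logit softmax value is within ε of the maximum. -/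
set_option maxHeartbeats 1000000


/-- For `λ ≥ (W(1/e) + (n-2)/e)/ε`, the logit softmax of `n ≥ 2` (here `n + 2`)
utilities with strictly positive maximum is within `ε` of the maximum. -/
theorem softmax_eps_close (n : ℕ) (eps : ℝ) (heps : 0 < eps)
    (a : Fin (n + 2) → ℝ)
    (hmax : 0 < Finset.univ.sup' Finset.univ_nonempty a)
    (w : ℝ) (hw : 0 < w) (hwe : w * Real.exp w = Real.exp (-1))
    (lam : ℝ)
    (hlam : (w + (((n + 2 : ℕ) : ℝ) - 2) / Real.exp 1) / eps ≤ lam) :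
    Finset.univ.sup' Finset.univ_nonempty a -
        (∑ i, a i * Real.exp (lam * a i)) / (∑ i, Real.exp (lam * a i)) ≤ eps := by
  have e1 : (0:ℝ) < Real.exp 1 := Real.exp_pos 1
  set M := Finset.univ.sup' Finset.univ_nonempty a with hM
  have hnum : (((n + 2 : ℕ) : ℝ) - 2) / Real.exp 1 = (n : ℝ) / Real.exp 1 := by
    push_cast; ring
  rw [hnum] at hlam
  have hnn : (0:ℝ) ≤ (n : ℝ) / Real.exp 1 := by positivity
  have hlam0 : 0 < lam :=
    lt_of_lt_of_le (by positivity) hlam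
  have hlameps : w + (n : ℝ) / Real.exp 1 ≤ eps * lam := by
    rw [div_le_iff₀ heps] at hlam; linarith
  -- key lemma: t ≤ w * (exp t + 1) for all t
  have hwexp : w = Real.exp (-1 - w) := by
    have := Real.exp_sub (-1) w
    rw [← hwe] at this
    field_simp at this ⊢
    linarith [this]
  have key1 : ∀ t : ℝ, t ≤ w * (Real.exp t + 1) := by
    intro t
    have h1 : (t - 1 - w) + 1 ≤ Real.exp (t - 1 - w) := Real.add_one_le_exp _
    have h2 : w * Real.exp t = Real.exp (t - 1 - w) := by
      conv_lhs => rw [hwexp]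
      rw [← Real.exp_add]; congr 1; ring
    nlinarith [hwexp]
  -- argmax j
  obtain ⟨j, -, hj⟩ := Finset.exists_mem_eq_sup' (Finset.univ_nonempty) a
  have haM : ∀ i, a i ≤ M := fun i => Finset.le_sup' a (Finset.mem_univ i)
  -- another index k ≠ j
  have hcard : 1 < n + 2 := by omega
  obtain ⟨k, hk⟩ := exists_ne j
  have hS : 0 < ∑ i, Real.exp (lam * a i) :=
    Finset.sum_pos (fun i _ => Real.exp_pos _) Finset.univ_nonempty
  set S := ∑ i, Real.exp (lam * a i) with hSdef
  set N := ∑ i, a i * Real.exp (lam * a i) with hNdef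
  have hexpand : ∑ i, (M - a i) * Real.exp (lam * a i) = M * S - N := by
    rw [hSdef, hNdef, Finset.mul_sum, ← Finset.sum_sub_distrib]
    exact Finset.sum_congr rfl (fun i _ => by ring)
  -- main estimate
  have hjk : ({j, k} : Finset (Fin (n+2))) ⊆ Finset.univ := Finset.subset_univ _
  have hpair : ∑ i ∈ ({j, k} : Finset (Fin (n+2))), (M - a i) * Real.exp (lam * a i)
      = (M - a j) * Real.exp (lam * a j) + (M - a k) * Real.exp (lam * a k) :=
    Finset.sum_pair hk.symm
  have hsplit : ∑ i, (M - a i) * Real.exp (lam * a i)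
      = (∑ i ∈ Finset.univ \ {j, k}, (M - a i) * Real.exp (lam * a i))
        + ((M - a j) * Real.exp (lam * a j) + (M - a k) * Real.exp (lam * a k)) := by
    rw [← hpair, Finset.sum_sdiff hjk]
  have hcard2 : (Finset.univ \ ({j, k} : Finset (Fin (n+2)))).card = n := by
    rw [Finset.card_sdiff_of_subset hjk, Finset.card_univ, Finset.card_pair hk.symm]
    simp
  -- per-term bound for the rest
  have hterm : ∀ i : Fin (n+2), (M - a i) * Real.exp (lam * a i)
      ≤ Real.exp (lam * M) / (lam * Real.exp 1) := by
    intro i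
    have h1 : lam * (M - a i) ≤ Real.exp (lam * (M - a i) - 1) := by
      have := Real.add_one_le_exp (lam * (M - a i) - 1); linarith
    have hep : 0 < Real.exp (lam * a i) := Real.exp_pos _
    have h2 : lam * (M - a i) * Real.exp (lam * a i)
        ≤ Real.exp (lam * (M - a i) - 1) * Real.exp (lam * a i) := by
      exact mul_le_mul_of_nonneg_right h1 hep.le
    have h4 : lam * (M - a i) * Real.exp (lam * a i) * Real.exp 1
        ≤ Real.exp (lam * (M - a i) - 1) * Real.exp (lam * a i) * Real.exp 1 :=
      mul_le_mul_of_nonneg_right h2 e1.le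
    have h5 : Real.exp (lam * (M - a i) - 1) * Real.exp (lam * a i) * Real.exp 1
        = Real.exp (lam * M) := by
      rw [← Real.exp_add, ← Real.exp_add]; congr 1; ring
    rw [le_div_iff₀ (by positivity)]
    calc (M - a i) * Real.exp (lam * a i) * (lam * Real.exp 1)
        = lam * (M - a i) * Real.exp (lam * a i) * Real.exp 1 := by ring
      _ ≤ Real.exp (lam * (M - a i) - 1) * Real.exp (lam * a i) * Real.exp 1 := h4
      _ = Real.exp (lam * M) := h5
  have hrest : ∑ i ∈ Finset.univ \ ({j, k} : Finset (Fin (n+2))),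
      (M - a i) * Real.exp (lam * a i)
      ≤ (n : ℝ) * (Real.exp (lam * M) / (lam * Real.exp 1)) := by
    calc ∑ i ∈ Finset.univ \ ({j, k} : Finset (Fin (n+2))), (M - a i) * Real.exp (lam * a i)
        ≤ ∑ _i ∈ Finset.univ \ ({j, k} : Finset (Fin (n+2))),
            Real.exp (lam * M) / (lam * Real.exp 1) :=
          Finset.sum_le_sum (fun i _ => hterm i)
      _ = (n : ℝ) * (Real.exp (lam * M) / (lam * Real.exp 1)) := by
          rw [Finset.sum_const, hcard2, nsmul_eq_mul]
  -- the j term is zero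
  have hjterm : (M - a j) * Real.exp (lam * a j) = 0 := by
    rw [← hj]; ring
  -- the k term
  have hkterm : (M - a k) * Real.exp (lam * a k)
      ≤ w / lam * (Real.exp (lam * M) + Real.exp (lam * a k)) := by
    have h1 := key1 (lam * (M - a k))
    have hep : 0 < Real.exp (lam * a k) := Real.exp_pos _
    have h2 : Real.exp (lam * (M - a k)) * Real.exp (lam * a k) = Real.exp (lam * M) := by
      rw [← Real.exp_add]; ring_nf
    have h3 : lam * (M - a k) * Real.exp (lam * a k)
        ≤ w * (Real.exp (lam * (M - a k)) + 1) * Real.exp (lam * a k) :=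
      mul_le_mul_of_nonneg_right h1 hep.le
    rw [div_mul_eq_mul_div, le_div_iff₀ hlam0]
    nlinarith
  -- combine: numerator ≤ eps * (exp(lam a j) + exp(lam a k)) ≤ eps * S
  have hejk : Real.exp (lam * a j) + Real.exp (lam * a k) ≤ S := by
    have := Finset.sum_le_sum_of_subset_of_nonneg hjk
      (fun i _ _ => (Real.exp_pos (lam * a i)).le)
    rw [Finset.sum_pair hk.symm] at this
    exact this
  have hMj : Real.exp (lam * M) = Real.exp (lam * a j) := by rw [hM, hj]
  have hmain : ∑ i, (M - a i) * Real.exp (lam * a i) ≤ eps * S := by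
    rw [hsplit, hjterm]
    have hbound : (∑ i ∈ Finset.univ \ ({j, k} : Finset (Fin (n+2))),
        (M - a i) * Real.exp (lam * a i)) + (0 + (M - a k) * Real.exp (lam * a k))
        ≤ (n : ℝ) * (Real.exp (lam * M) / (lam * Real.exp 1))
          + w / lam * (Real.exp (lam * M) + Real.exp (lam * a k)) := by
      linarith [hrest, hkterm]
    refine le_trans hbound ?_
    have hepj : 0 < Real.exp (lam * a j) := Real.exp_pos _
    have hepk : 0 < Real.exp (lam * a k) := Real.exp_pos _
    have hne : (n : ℝ) ≤ (eps * lam - w) * Real.exp 1 := by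
      have h : (n : ℝ) / Real.exp 1 ≤ eps * lam - w := by linarith
      linarith [(div_le_iff₀ e1).mp h]
    have hwle : 0 ≤ eps * lam - w := by nlinarith
    have hmul : (n : ℝ) * Real.exp (lam * a j)
        + w * Real.exp 1 * (Real.exp (lam * a j) + Real.exp (lam * a k))
        ≤ eps * lam * Real.exp 1 * (Real.exp (lam * a j) + Real.exp (lam * a k)) := by
      nlinarith [mul_le_mul_of_nonneg_right hne hepj.le,
        mul_nonneg (mul_nonneg hwle e1.le) hepk.le,
        mul_nonneg (mul_nonneg hwle e1.le) hepj.le]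
    have hstep : (n : ℝ) * (Real.exp (lam * M) / (lam * Real.exp 1))
        + w / lam * (Real.exp (lam * M) + Real.exp (lam * a k))
        ≤ eps * (Real.exp (lam * a j) + Real.exp (lam * a k)) := by
      rw [hMj]
      have hq : (n : ℝ) * (Real.exp (lam * a j) / (lam * Real.exp 1))
          + w / lam * (Real.exp (lam * a j) + Real.exp (lam * a k))
          = ((n : ℝ) * Real.exp (lam * a j)
            + w * Real.exp 1 * (Real.exp (lam * a j) + Real.exp (lam * a k)))
              / (lam * Real.exp 1) := by
        field_simp
      rw [hq, div_le_iff₀ (by positivity)]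
      nlinarith [hmul]
    calc _ ≤ eps * (Real.exp (lam * a j) + Real.exp (lam * a k)) := hstep
      _ ≤ eps * S := mul_le_mul_of_nonneg_left hejk heps.le
  -- finish
  have hfin : M - N / S = (M * S - N) / S := by field_simp
  rw [hfin, ← hexpand, div_le_iff₀ hS]
  linarith [hmain]
end

section
/- Consider a two-player normal-form game where the leader has m actions, the follower has n ≥ 2 actions, with leader utility u₁ : Fin m → Fin n → ℝ and follower utility u₂ : Fin m → Fin n → ℝ, and assume u₂(i,j) > 0 for all i, j. For a leader mixed strategy σ in the standard simplex over Fin m, let v_j(σ) = ∑_i σ_i·u₂(i,j) be the follower's expected utility of action j, and let LQR_λ(σ)_j = exp(λ·v_j(σ)) / ∑_k exp(λ·v_k(σ)) be the follower's logit quantal response. Let ε > 0, let w > 0 satisfy w·exp(w) = exp(−1), and suppose λ ≥ (w + (n−2)/e)/ε. If σ* is a leader strategy such that ∑_j LQR_λ(σ*)_j·(∑_i σ*_i·u₁(i,j)) ≥ ∑_j LQR_λ(σ*)_j·(∑_i σ_i·u₁(i,j)) for every leader strategy σ (i.e., (σ*, LQR_λ(σ*)) is a Quantal Nash Equilibrium),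 then the profile (σ*, LQR_λ(σ*)) is an ε-Nash equilibrium: the leader's strategy is an exact best response, and the follower's strategy satisfies ∑_j LQR_λ(σ*)_j·v_j(σ*) ≥ (max_j v_j(σ*)) − ε. -/
lemma mul_exp_neg_le (x : ℝ) : x * Real.exp (-x) ≤ Real.exp (-1) := by
  have h : x ≤ Real.exp (x - 1) := by linarith [Real.add_one_le_exp (x - 1)]
  calc x * Real.exp (-x) ≤ Real.exp (x - 1) * Real.exp (-x) :=
        mul_le_mul_of_nonneg_right h (Real.exp_nonneg _)
    _ = Real.exp (-1) := by rw [← Real.exp_add]; ring_nf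

lemma key_w (w : ℝ) (hw : 0 < w) (hwe : w * Real.exp w = Real.exp (-1)) (x : ℝ) :
    x * Real.exp (-x) ≤ w * (1 + Real.exp (-x)) := by
  have h : x - (1 + w) + 1 ≤ Real.exp (x - (1 + w)) := Real.add_one_le_exp _
  have e1 : Real.exp (x - (1 + w)) = Real.exp x * Real.exp (-1) * Real.exp (-w) := by
    rw [← Real.exp_add, ← Real.exp_add]; ring_nf
  have e2 : Real.exp w * Real.exp (-w) = 1 := by rw [← Real.exp_add]; simp
  have key : x ≤ w * (Real.exp x + 1) := by
    rw [e1, ← hwe] at h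
    have h2 : Real.exp x * (w * Real.exp w) * Real.exp (-w) = w * Real.exp x := by
      have h3 : Real.exp x * (w * Real.exp w) * Real.exp (-w)
          = w * Real.exp x * (Real.exp w * Real.exp (-w)) := by ring
      rw [h3, e2, mul_one]
    linarith [h, h2]
  have e3 : Real.exp x * Real.exp (-x) = 1 := by rw [← Real.exp_add]; simp
  calc x * Real.exp (-x) ≤ w * (Real.exp x + 1) * Real.exp (-x) :=
        mul_le_mul_of_nonneg_right key (Real.exp_nonneg _)
    _ = w * (1 + Real.exp (-x)) := by nlinarith [e3]


lemma final_step (M S A eps : ℝ) (h7 : M * S - A ≤ eps * S) : (M - eps) * S ≤ A := by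
  nlinarith [h7]

open Real Finset in
/-- PPAD-hardness core claim: with `λ ≥ (W(1/e) + (n-2)/e)/ε`, in a game with
strictly positive follower utilities, any Quantal Nash Equilibrium
`(σ*, LQR_λ(σ*))` is an ε-Nash equilibrium: the leader plays an exact best
response and the follower's logit quantal response is an ε-best response. -/
theorem qne_is_eps_nash (m n : ℕ) (u1 u2 : Fin m → Fin (n + 2) → ℝ)
    (hu2 : ∀ i j, 0 < u2 i j)
    (eps : ℝ) (heps : 0 < eps)
    (w : ℝ) (hw : 0 < w) (hwe : w * Real.exp w = Real.exp (-1))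
    (lam : ℝ) (hlam : (w + (((n + 2 : ℕ) : ℝ) - 2) / Real.exp 1) / eps ≤ lam)
    (v : (Fin m → ℝ) → Fin (n + 2) → ℝ)
    (hv : ∀ σ j, v σ j = ∑ i, σ i * u2 i j)
    (LQR : (Fin m → ℝ) → Fin (n + 2) → ℝ)
    (hLQR : ∀ σ j, LQR σ j = Real.exp (lam * v σ j) / ∑ k, Real.exp (lam * v σ k))
    (σs : Fin m → ℝ) (hσs : σs ∈ stdSimplex ℝ (Fin m))
    (hQNE : ∀ σ ∈ stdSimplex ℝ (Fin m),
      ∑ j, LQR σs j * (∑ i, σ i * u1 i j) ≤ ∑ j, LQR σs j * (∑ i, σs i * u1 i j)) :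
    (∀ σ ∈ stdSimplex ℝ (Fin m),
        ∑ j, LQR σs j * (∑ i, σ i * u1 i j) ≤ ∑ j, LQR σs j * (∑ i, σs i * u1 i j)) ∧
      Finset.univ.sup' Finset.univ_nonempty (fun j => v σs j) - eps ≤
        ∑ j, LQR σs j * v σs j := by
  refine ⟨hQNE, ?_⟩
  set M := Finset.univ.sup' Finset.univ_nonempty (fun j => v σs j) with hMdef
  obtain ⟨j0, -, hj0⟩ := Finset.exists_mem_eq_sup' Finset.univ_nonempty (fun j => v σs j)
  obtain ⟨j1, hj1⟩ := exists_ne j0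
  set N : ℝ := (((n + 2 : ℕ) : ℝ) - 2) with hNdef
  have hN : N = (n : ℝ) := by rw [hNdef]; push_cast; ring
  have hN0 : 0 ≤ N := by rw [hN]; positivity
  have hwN : 0 < w + N / Real.exp 1 := by positivity
  have hlam0 : 0 < lam := lt_of_lt_of_le (div_pos hwN heps) hlam
  set d : Fin (n + 2) → ℝ := fun j => M - v σs j with hd
  have hd0 : ∀ j, 0 ≤ d j := fun j =>
    sub_nonneg.2 (Finset.le_sup' (fun j => v σs j) (Finset.mem_univ j))
  have hdj0 : d j0 = 0 := by simp [hd, hMdef, ← hj0]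
  set t : Fin (n + 2) → ℝ := fun j => d j * Real.exp (-(lam * d j)) with ht
  set U : ℝ := ∑ j, Real.exp (-(lam * d j)) with hU
  have ht_nonneg : ∀ j, 0 ≤ t j := fun j => mul_nonneg (hd0 j) (Real.exp_nonneg _)
  have hterm : ∀ j, t j ≤ Real.exp (-1) / lam := by
    intro j
    rw [le_div_iff₀ hlam0]
    have h := mul_exp_neg_le (lam * d j)
    calc t j * lam = lam * d j * Real.exp (-(lam * d j)) := by rw [ht]; ring
      _ ≤ Real.exp (-1) := h
  have hj0mem : j0 ∈ Finset.univ.erase j1 := Finset.mem_erase.2 ⟨Ne.symm hj1, Finset.mem_univ j0⟩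
  have hTsplit : ∑ j, t j = t j1 + (t j0 + ∑ j ∈ (Finset.univ.erase j1).erase j0, t j) := by
    rw [← Finset.add_sum_erase _ t (Finset.mem_univ j1), ← Finset.add_sum_erase _ t hj0mem]
  have hcard : ((Finset.univ.erase j1).erase j0).card = n := by
    rw [Finset.card_erase_of_mem hj0mem, Finset.card_erase_of_mem (Finset.mem_univ j1),
      Finset.card_univ, Fintype.card_fin]
    omega
  have htj0 : t j0 = 0 := by simp [ht, hdj0]
  have hrest : ∑ j ∈ (Finset.univ.erase j1).erase j0, t j ≤ N * (Real.exp (-1) / lam) := by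
    calc ∑ j ∈ (Finset.univ.erase j1).erase j0, t j
        ≤ ((Finset.univ.erase j1).erase j0).card • (Real.exp (-1) / lam) :=
          Finset.sum_le_card_nsmul _ _ _ (fun j _ => hterm j)
      _ = N * (Real.exp (-1) / lam) := by rw [hcard, nsmul_eq_mul, hN]
  have hU2 : 1 + Real.exp (-(lam * d j1)) ≤ U := by
    have hsub : ∑ j ∈ ({j0, j1} : Finset (Fin (n + 2))), Real.exp (-(lam * d j)) ≤ U :=
      Finset.sum_le_sum_of_subset_of_nonneg (Finset.subset_univ _)
        (fun _ _ _ => Real.exp_nonneg _)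
    rwa [Finset.sum_pair (Ne.symm hj1), hdj0, mul_zero, neg_zero, Real.exp_zero] at hsub
  have hU1 : (1 : ℝ) ≤ U :=
    le_trans (by linarith [Real.exp_nonneg (-(lam * d j1))]) hU2
  have htj1 : t j1 ≤ w / lam * (1 + Real.exp (-(lam * d j1))) := by
    have h := key_w w hw hwe (lam * d j1)
    rw [div_mul_eq_mul_div, le_div_iff₀ hlam0]
    calc t j1 * lam = lam * d j1 * Real.exp (-(lam * d j1)) := by rw [ht]; ring
      _ ≤ w * (1 + Real.exp (-(lam * d j1))) := h
  have hTU : ∑ j, t j ≤ eps * U := by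
    have ha : t j1 ≤ w / lam * U :=
      le_trans htj1 (mul_le_mul_of_nonneg_left hU2 (by positivity))
    have hb : ∑ j ∈ (Finset.univ.erase j1).erase j0, t j ≤ N * (Real.exp (-1) / lam) * U := by
      refine le_trans hrest ?_
      have hnn : 0 ≤ N * (Real.exp (-1) / lam) :=
        mul_nonneg hN0 (le_of_lt (div_pos (Real.exp_pos _) hlam0))
      nlinarith [hU1]
    have h1 : ∑ j, t j ≤ w / lam * U + N * (Real.exp (-1) / lam) * U := by
      rw [hTsplit, htj0, zero_add]; linarith
    have h2 : w + N / Real.exp 1 ≤ eps * lam := by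
      rw [div_le_iff₀ heps] at hlam; linarith
    have hcoef : w / lam + N * (Real.exp (-1) / lam) ≤ eps := by
      rw [Real.exp_neg]
      have heq : w / lam + N * ((Real.exp 1)⁻¹ / lam) = (w + N / Real.exp 1) / lam := by
        field_simp
      rw [heq, div_le_iff₀ hlam0]
      linarith
    calc ∑ j, t j ≤ w / lam * U + N * (Real.exp (-1) / lam) * U := h1
      _ = (w / lam + N * (Real.exp (-1) / lam)) * U := by ring
      _ ≤ eps * U := mul_le_mul_of_nonneg_right hcoef (by linarith)
  -- assemble
  have hSpos : 0 < ∑ k, Real.exp (lam * v σs k) :=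
    Finset.sum_pos (fun k _ => Real.exp_pos _) Finset.univ_nonempty
  have hSU : ∑ k, Real.exp (lam * v σs k) = Real.exp (lam * M) * U := by
    rw [hU, Finset.mul_sum]
    refine Finset.sum_congr rfl fun j _ => ?_
    rw [← Real.exp_add]
    congr 1
    simp only [hd]
    ring
  have hMT : ∑ j, Real.exp (lam * v σs j) * (M - v σs j) = Real.exp (lam * M) * ∑ j, t j := by
    rw [Finset.mul_sum]
    refine Finset.sum_congr rfl fun j _ => ?_
    simp only [ht, hd]
    have harg : lam * v σs j = lam * M + -(lam * (M - v σs j)) := by ring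
    rw [harg, Real.exp_add]
    ring
  have hfinal : ∑ j, LQR σs j * v σs j
      = (∑ j, Real.exp (lam * v σs j) * v σs j) / (∑ k, Real.exp (lam * v σs k)) := by
    rw [Finset.sum_div]
    refine Finset.sum_congr rfl fun j _ => ?_
    rw [hLQR]
    ring
  have hsum : ∑ j, Real.exp (lam * v σs j) * (M - v σs j)
      = M * (∑ k, Real.exp (lam * v σs k)) - ∑ j, Real.exp (lam * v σs j) * v σs j := by
    simp only [mul_sub]
    rw [Finset.sum_sub_distrib]
    congr 1
    rw [Finset.mul_sum]
    exact Finset.sum_congr rfl fun j _ => by ring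
  have hexp : 0 ≤ Real.exp (lam * M) := Real.exp_nonneg _
  have h4 : Real.exp (lam * M) * (∑ j, t j) ≤ Real.exp (lam * M) * (eps * U) :=
    mul_le_mul_of_nonneg_left hTU hexp
  have h5 : Real.exp (lam * M) * (eps * U) = eps * ∑ k, Real.exp (lam * v σs k) := by
    rw [hSU]; ring
  have h6 : M * (∑ k, Real.exp (lam * v σs k)) - (∑ j, Real.exp (lam * v σs j) * v σs j)
      = Real.exp (lam * M) * ∑ j, t j := hsum.symm.trans hMT
  set S := ∑ k, Real.exp (lam * v σs k) with hSdef
  set A := ∑ j, Real.exp (lam * v σs j) * v σs j with hAdef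
  set T := ∑ j, t j with hTdef
  set E := Real.exp (lam * M) with hEdef
  have h7 : M * S - A ≤ eps * S := by
    calc M * S - A = E * T := h6
      _ ≤ E * (eps * U) := h4
      _ = eps * S := h5
  have key : (M - eps) * S ≤ A := final_step M S A eps h7
  rw [hfinal, le_div_iff₀ hSpos]
  exact key
end

section
/- Let q : ℝ → ℝ be strictly monotonically increasing with q(x) > 0 for all x, and let a, b, c be reals with a < b < c. Then (−b)·q(−c)/(q(−c) + q(−a)) + (−a)·q(−a)/(q(−c) + q(−a)) > (−b)·q(−b)/(q(−b) + q(−a)) + (−a)·q(−a)/(q(−b) + q(−a)). Consequently, in the 2×2 zero-sum game with leader payoff matrix [[b, a], [c, a]] (follower payoffs are the negatives), the follower's expected utility when the leader plays the first row against the canonical quantal response to the second row strictly exceeds the follower's expected utility when the leader plays the first row against the canonical quantal response to the first row; hence the canonical quantal response with generator q is not a pretty-good-response. -/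
/-- With a strictly increasing positive generator `q` and `a < b < c`, in the
2×2 zero-sum game with leader payoffs `[[b, a], [c, a]]` the follower does
strictly better against the leader's first row by quantal-responding to the
second row than to the first; hence the canonical quantal response is not a
pretty-good-response.  Here `u2 p p'` is the follower's expected utility when
the leader plays the first row with probability `p` and the follower plays the
canonical quantal response to the leader strategy with probability `p'`. -/
theorem canonical_qr_not_pretty_good_response
    (q : ℝ → ℝ) (hq : StrictMono q) (hqpos : ∀ x, 0 < q x)
    (a b c : ℝ) (hab : a < b) (hbc : b < c)
    (vA : ℝ → ℝ) (hvA : ∀ p, vA p = -(p * b + (1 - p) * c))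
    (u2 : ℝ → ℝ → ℝ)
    (hu2 : ∀ p p', u2 p p' =
      (q (vA p') / (q (vA p') + q (-a))) * vA p +
        (q (-a) / (q (vA p') + q (-a))) * (-a)) :
    ((-b) * q (-c) / (q (-c) + q (-a)) + (-a) * q (-a) / (q (-c) + q (-a)) >
        (-b) * q (-b) / (q (-b) + q (-a)) + (-a) * q (-a) / (q (-b) + q (-a))) ∧
      ¬ (∀ p ∈ Set.Icc (0 : ℝ) 1, ∀ p' ∈ Set.Icc (0 : ℝ) 1, u2 p p' ≤ u2 p p) := by
  have hA : 0 < q (-a) := hqpos _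
  have hC : 0 < q (-c) := hqpos _
  have hB : 0 < q (-b) := hqpos _
  have hlt : q (-c) < q (-b) := hq (by linarith)
  have key : ((-b) * q (-c) / (q (-c) + q (-a)) + (-a) * q (-a) / (q (-c) + q (-a)) >
      (-b) * q (-b) / (q (-b) + q (-a)) + (-a) * q (-a) / (q (-b) + q (-a))) := by
    rw [← add_div, ← add_div, gt_iff_lt, div_lt_div_iff₀ (by linarith) (by linarith)]
    nlinarith [mul_pos hA (mul_pos (sub_pos.2 hlt) (sub_pos.2 hab))]
  refine ⟨key, fun h => ?_⟩
  have h10 := h 1 (by constructor <;> norm_num) 0 (by constructor <;> norm_num)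
  have hv1 : vA 1 = -b := by rw [hvA]; ring
  have hv0 : vA 0 = -c := by rw [hvA]; ring
  rw [hu2, hu2, hv1, hv0] at h10
  ring_nf at key h10
  linarith
end

section
/- Let n ≥ 1, let x : Fin n → ℝ satisfy x_i > 0 for all i, let σ : Fin n → ℝ satisfy 0 ≤ σ_i ≤ 1 for all i, and let q : ℝ → ℝ be strictly monotone increasing with q(y) > 0 for all y. Set A = ∑_i x_i·σ_i, B = ∑_i x_i·(1 − σ_i), and S = ∑_i x_i. Then (1/(2n)) · (A·q(−A/(2n)) + B·q(−B/(2n))) / (q(−A/(2n)) + q(−B/(2n))) = S/(4n) if and only if A = B. -/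
/-- Equality characterization in the partition subtrees: with a strictly
increasing positive generator `q`, the leader's expected utility equals the
maximum `S/(4n)` exactly when the two subset sums `A` and `B` coincide. -/
theorem partition_subtree_eq_iff (n : ℕ) (hn : 1 ≤ n)
    (x σ : Fin n → ℝ) (hx : ∀ i, 0 < x i)
    (hσ : ∀ i, 0 ≤ σ i ∧ σ i ≤ 1)
    (q : ℝ → ℝ) (hq : StrictMono q) (hqpos : ∀ y, 0 < q y)
    (A B S : ℝ)
    (hA : A = ∑ i, x i * σ i) (hB : B = ∑ i, x i * (1 - σ i))
    (hS : S = ∑ i, x i) :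
    (1 / (2 * (n : ℝ))) *
        ((A * q (-(A / (2 * (n : ℝ)))) + B * q (-(B / (2 * (n : ℝ))))) /
          (q (-(A / (2 * (n : ℝ)))) + q (-(B / (2 * (n : ℝ)))))) =
      S / (4 * (n : ℝ)) ↔ A = B := by
  have hnpos : (0 : ℝ) < (n : ℝ) := by exact_mod_cast Nat.lt_of_lt_of_le Nat.zero_lt_one hn
  set a := q (-(A / (2 * (n : ℝ)))) with ha
  set b := q (-(B / (2 * (n : ℝ)))) with hb
  have hapos : 0 < a := hqpos _
  have hbpos : 0 < b := hqpos _
  have habpos : 0 < a + b := by linarith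
  have hSAB : S = A + B := by
    rw [hS, hA, hB, ← Finset.sum_add_distrib]
    exact Finset.sum_congr rfl (fun i _ => by ring)
  have key : (1 / (2 * (n : ℝ))) * ((A * a + B * b) / (a + b)) = S / (4 * (n : ℝ))
      ↔ (A - B) * (a - b) = 0 := by
    rw [hSAB]
    constructor
    · intro h
      field_simp at h
      nlinarith [h]
    · intro h
      field_simp
      nlinarith [h]
  rw [key]
  constructor
  · intro h
    rcases mul_eq_zero.mp h with h' | h'
    · linarith
    · have hab : a = b := by linarith
      have := hq.injective hab
      have hN : (2 * (n : ℝ)) ≠ 0 := by positivity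
      have : A / (2 * (n : ℝ)) = B / (2 * (n : ℝ)) := by
        have := neg_injective this
        linarith
      field_simp at this
      exact this
  · intro h
    rw [h]
    ring
end

section
/- Let n ≥ 1 and let a : Fin n → ℝ. Then the logit softmax value tends to the maximum as the rationality parameter grows: the function λ ↦ (∑_i a_i·exp(λ·a_i)) / (∑_i exp(λ·a_i)) tends to max_i a_i as λ → ∞. -/
/-- The logit softmax value tends to the maximum as the rationality parameter
`λ` tends to infinity. -/
theorem softmax_tendsto_max (n : ℕ) (a : Fin (n + 1) → ℝ) :
    Filter.Tendsto
      (fun lam : ℝ =>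
        (∑ i, a i * Real.exp (lam * a i)) / (∑ i, Real.exp (lam * a i)))
      Filter.atTop
      (nhds (Finset.univ.sup' Finset.univ_nonempty a)) := by
  set M := Finset.univ.sup' Finset.univ_nonempty a with hM
  have hle : ∀ i, a i ≤ M := fun i => Finset.le_sup' a (Finset.mem_univ i)
  have hex : ∃ i : Fin (n + 1), a i = M := by
    obtain ⟨i, _, hi⟩ := Finset.exists_mem_eq_sup' (Finset.univ_nonempty) a
    exact ⟨i, hi.symm⟩
  -- rewrite the function by dividing numerator and denominator by exp (lam * M)
  have key : ∀ lam : ℝ,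
      (∑ i, a i * Real.exp (lam * a i)) / (∑ i, Real.exp (lam * a i))
      = (∑ i, a i * Real.exp (lam * (a i - M))) /
        (∑ i, Real.exp (lam * (a i - M))) := by
    intro lam
    have h1 : ∀ i : Fin (n + 1),
        Real.exp (lam * a i) = Real.exp (lam * M) * Real.exp (lam * (a i - M)) := by
      intro i; rw [← Real.exp_add]; ring_nf
    have hnum : (∑ i, a i * Real.exp (lam * a i))
        = Real.exp (lam * M) * ∑ i, a i * Real.exp (lam * (a i - M)) := by
      rw [Finset.mul_sum]; apply Finset.sum_congr rfl; intro i _; rw [h1 i]; ring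
    have hden : (∑ i, Real.exp (lam * a i))
        = Real.exp (lam * M) * ∑ i, Real.exp (lam * (a i - M)) := by
      rw [Finset.mul_sum]; apply Finset.sum_congr rfl; intro i _; rw [h1 i]
    rw [hnum, hden, mul_div_mul_left _ _ (Real.exp_ne_zero _)]
  -- limits of individual exponential terms
  have hterm : ∀ i : Fin (n + 1),
      Filter.Tendsto (fun lam : ℝ => Real.exp (lam * (a i - M))) Filter.atTop
        (nhds (if a i = M then (1 : ℝ) else 0)) := by
    intro i
    by_cases h : a i = M
    · simp only [h, if_pos, sub_self, mul_zero, Real.exp_zero]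
      exact tendsto_const_nhds
    · simp only [h, if_neg, if_false]
      have hlt : a i - M < 0 := sub_neg.mpr (lt_of_le_of_ne (hle i) h)
      have : Filter.Tendsto (fun lam : ℝ => lam * (a i - M)) Filter.atTop Filter.atBot :=
        Filter.Tendsto.atTop_mul_const_of_neg hlt Filter.tendsto_id
      exact Real.tendsto_exp_atBot.comp this
  set D : ℝ := ∑ i, (if a i = M then (1 : ℝ) else 0) with hD
  have hDpos : 0 < D := by
    obtain ⟨i, hi⟩ := hex
    have : (fun i : Fin (n+1) => if a i = M then (1:ℝ) else 0) i ≤ D := by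
      apply Finset.single_le_sum (f := fun i => if a i = M then (1:ℝ) else 0)
        (fun j _ => by positivity) (Finset.mem_univ i)
    simp only [hi, if_pos] at this
    linarith
  have hden_tendsto : Filter.Tendsto (fun lam : ℝ => ∑ i, Real.exp (lam * (a i - M)))
      Filter.atTop (nhds D) := by
    exact tendsto_finset_sum _ (fun i _ => hterm i)
  have hNeq : (∑ i, (if a i = M then a i else 0)) = M * D := by
    rw [hD, Finset.mul_sum]
    apply Finset.sum_congr rfl
    intro i _
    by_cases h : a i = M <;> simp [h]
  have hnum_tendsto : Filter.Tendsto (fun lam : ℝ => ∑ i, a i * Real.exp (lam * (a i - M)))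
      Filter.atTop (nhds (M * D)) := by
    rw [← hNeq]
    apply tendsto_finset_sum
    intro i _
    have := (hterm i).const_mul (a i)
    convert this using 2
    by_cases h : a i = M <;> simp [h]
  have hdiv := hnum_tendsto.div hden_tendsto (ne_of_gt hDpos)
  have : M * D / D = M := by field_simp
  rw [this] at hdiv
  exact hdiv.congr (fun lam => (key lam).symm)
end

section
/- Let q : ℝ → ℝ be strictly monotonically increasing with q(x) > 0 for all x. For p ∈ [0,1] define U(p) = (p·q(p) + (1−p)·q(1−p)) / (q(p) + q(1−p)). Then U(1/2) = 1/2 and U(p) > 1/2 for every p ∈ [0,1] with p ≠ 1/2; that is, in the 2×2 common-payoff coordination game with payoff matrix [[1,0],[0,1]], the uniform leader strategy is the strict global minimum of the leader's expected utility against any canonical quantal response with strictly increasing positive generator. -/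
/-- In the 2×2 common-payoff coordination game, against any canonical quantal
response with strictly increasing positive generator `q`, the uniform leader
strategy is the strict global minimum of the leader's expected utility:
`U(1/2) = 1/2` and `U(p) > 1/2` for all `p ∈ [0,1]`, `p ≠ 1/2`. -/
theorem coordination_uniform_strict_min (q : ℝ → ℝ) (hq : StrictMono q)
    (hqpos : ∀ x, 0 < q x)
    (U : ℝ → ℝ)
    (hU : ∀ p, U p = (p * q p + (1 - p) * q (1 - p)) / (q p + q (1 - p))) :
    U (1 / 2) = 1 / 2 ∧
      ∀ p ∈ Set.Icc (0 : ℝ) 1, p ≠ 1 / 2 → 1 / 2 < U p := by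
  constructor
  · rw [hU]
    have h : (1 : ℝ) - 1 / 2 = 1 / 2 := by norm_num
    rw [h]
    have := hqpos (1 / 2 : ℝ)
    field_simp
  · intro p _ hp
    rw [hU]
    have hden : 0 < q p + q (1 - p) := by linarith [hqpos p, hqpos (1 - p)]
    rw [lt_div_iff₀ hden]
    rcases lt_or_gt_of_ne hp with h | h
    · have hlt : q p < q (1 - p) := hq (by linarith)
      nlinarith
    · have hlt : q (1 - p) < q p := hq (by linarith)
      nlinarith
end

section
/- For p ∈ [0,1] define G(p) = (10p·exp(−10p) + 10(1−p)·exp(−10(1−p))) / (1 + exp(−10p) + exp(−10(1−p))). Then (i) G(p) = G(1−p) for all p ∈ [0,1], and (ii) G(4/5) > G(1/2). Consequently, in the zero-sum game with leader payoff matrix [[0,10,0],[0,0,10]] against a logit quantal responder with λ = 1, the uniform strategy is not a maximizer of the leader's expected utility, and the maximizers come in symmetric pairs p*, 1−p* with p* ≠ 1/2; the game has two distinct Quantal Stackelberg Equilibria, both different from uniform. -/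
lemma exp_neg_one_bounds : (0.36 : ℝ) < Real.exp (-1) ∧ Real.exp (-1) < 0.37 := by
  have h1 := Real.exp_one_lt_d9
  have h2 := Real.exp_one_gt_d9
  have hpos : (0:ℝ) < Real.exp 1 := Real.exp_pos 1
  rw [Real.exp_neg]
  constructor
  · rw [lt_inv_comm₀ (by norm_num) hpos]; nlinarith
  · rw [inv_lt_comm₀ hpos (by norm_num)]; nlinarith

lemma key_ineq : ∀ a b c : ℝ, a = Real.exp (-1) ^ 8 → b = Real.exp (-1) ^ 2 →
    c = Real.exp (-1) ^ 5 →
    (10 * c + 10 * c * a + 10 * c * b < 8 * a + 2 * b + 16 * a * c + 4 * b * c) := by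
  intro a b c ha hb hc
  obtain ⟨hl, hu⟩ := exp_neg_one_bounds
  set x := Real.exp (-1) with hx
  have hx0 : 0 < x := Real.exp_pos _
  have hb_l : (0.1296 : ℝ) < b := by rw [hb]; nlinarith
  have hb_u : b < 0.1369 := by rw [hb]; nlinarith
  have hc_u : c < 0.007 := by
    rw [hc]
    calc x ^ 5 < 0.37 ^ 5 := by gcongr
    _ < 0.007 := by norm_num
  have hc_l : 0 < c := by rw [hc]; positivity
  have ha_l : 0 < a := by rw [ha]; positivity
  have ha_u : a < 0.0004 := by
    rw [ha]
    calc x ^ 8 < 0.37 ^ 8 := by gcongr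
    _ < 0.0004 := by norm_num
  have hb0 : 0 < b := by linarith
  have hac : 0 < a * c := mul_pos ha_l hc_l
  have hbc : b * c < 0.001 := by nlinarith
  nlinarith [hac, hbc]

/-- Zero-sum gadget `[[0,10,0],[0,0,10]]` against a logit quantal responder
(λ = 1): the leader's value `G` is symmetric around `1/2`, satisfies
`G(4/5) > G(1/2)`, every maximizer `p*` on `[0,1]` is different from `1/2`
and comes with the symmetric maximizer `1 - p*`, and there exist two distinct
maximizers (two distinct Quantal Stackelberg Equilibria). -/
theorem zero_sum_gadget_two_qse (G : ℝ → ℝ)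
    (hG : ∀ p, G p =
      (10 * p * Real.exp (-(10 * p)) + 10 * (1 - p) * Real.exp (-(10 * (1 - p)))) /
        (1 + Real.exp (-(10 * p)) + Real.exp (-(10 * (1 - p))))) :
    (∀ p ∈ Set.Icc (0 : ℝ) 1, G p = G (1 - p)) ∧
      G (4 / 5) > G (1 / 2) ∧
      (∀ p ∈ Set.Icc (0 : ℝ) 1, (∀ p' ∈ Set.Icc (0 : ℝ) 1, G p' ≤ G p) →
        p ≠ 1 / 2 ∧ ∀ p' ∈ Set.Icc (0 : ℝ) 1, G p' ≤ G (1 - p)) ∧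
      ∃ p₁ ∈ Set.Icc (0 : ℝ) 1, ∃ p₂ ∈ Set.Icc (0 : ℝ) 1, p₁ ≠ p₂ ∧
        (∀ p' ∈ Set.Icc (0 : ℝ) 1, G p' ≤ G p₁) ∧
        (∀ p' ∈ Set.Icc (0 : ℝ) 1, G p' ≤ G p₂) := by
  -- symmetry
  have hsym : ∀ p : ℝ, G p = G (1 - p) := by
    intro p
    rw [hG, hG]
    ring_nf
  -- the key strict inequality
  have hkey : G (1 / 2) < G (4 / 5) := by
    rw [hG, hG]
    set x := Real.exp (-1) with hx
    have hx0 : 0 < x := Real.exp_pos _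
    have e8 : Real.exp (-(10 * (4/5 : ℝ))) = x ^ 8 := by
      rw [show -(10 * (4/5 : ℝ)) = (8:ℕ) * (-1) by norm_num, Real.exp_nat_mul]
    have e2 : Real.exp (-(10 * (1 - 4/5 : ℝ))) = x ^ 2 := by
      rw [show -(10 * (1 - 4/5 : ℝ)) = (2:ℕ) * (-1) by norm_num, Real.exp_nat_mul]
    have e5 : Real.exp (-(10 * (1/2 : ℝ))) = x ^ 5 := by
      rw [show -(10 * (1/2 : ℝ)) = (5:ℕ) * (-1) by norm_num, Real.exp_nat_mul]
    have e5' : Real.exp (-(10 * (1 - 1/2 : ℝ))) = x ^ 5 := by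
      rw [show -(10 * (1 - 1/2 : ℝ)) = (5:ℕ) * (-1) by norm_num, Real.exp_nat_mul]
    rw [e8, e2, e5, e5']
    rw [div_lt_div_iff₀ (by positivity) (by positivity)]
    have := key_ineq (x ^ 8) (x ^ 2) (x ^ 5) rfl rfl rfl
    nlinarith [this]
  -- part (iii)
  have hiii : ∀ p ∈ Set.Icc (0 : ℝ) 1, (∀ p' ∈ Set.Icc (0 : ℝ) 1, G p' ≤ G p) →
      p ≠ 1 / 2 ∧ ∀ p' ∈ Set.Icc (0 : ℝ) 1, G p' ≤ G (1 - p) := by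
    intro p hp hmax
    constructor
    · rintro rfl
      have := hmax (4/5) (by norm_num)
      linarith
    · intro p' hp'
      calc G p' ≤ G p := hmax p' hp'
      _ = G (1 - p) := hsym p
  -- continuity of G
  have hGc : Continuous G := by
    have : G = fun p =>
        (10 * p * Real.exp (-(10 * p)) + 10 * (1 - p) * Real.exp (-(10 * (1 - p)))) /
          (1 + Real.exp (-(10 * p)) + Real.exp (-(10 * (1 - p)))) := funext hG
    rw [this]
    apply Continuous.div
    · fun_prop
    · fun_prop
    · intro x; positivity
  -- existence of a maximizer
  obtain ⟨p, hp, hmax⟩ : ∃ p ∈ Set.Icc (0:ℝ) 1, ∀ p' ∈ Set.Icc (0:ℝ) 1, G p' ≤ G p := by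
    obtain ⟨p, hp, hmax⟩ := (isCompact_Icc : IsCompact (Set.Icc (0:ℝ) 1)).exists_isMaxOn (Set.nonempty_Icc.2 (by norm_num))
      hGc.continuousOn
    exact ⟨p, hp, isMaxOn_iff.mp hmax⟩
  have hmax' := hmax
  obtain ⟨hne, hmax2⟩ := hiii p hp hmax'
  refine ⟨fun q _ => hsym q, hkey, hiii, p, hp, 1 - p, ?_, ?_, hmax', hmax2⟩
  · obtain ⟨h0, h1⟩ := hp
    constructor <;> linarith
  · intro h; apply hne; linarith
end
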